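/- Let n ≥ 1 and let A be a symmetric (n+1)×(n+1) real matrix with A_ii = 0 for all i and A_{ij} > 0 for all i ≠ j. For x ∈ ℝ^n set x_{n+1} := 1 − Σ_{i=1}^n x_i and define g^{ij}(x) := −A_{ij} x_i x_j + δ_{ij} x_i Σ_{k=1}^{n+1} A_{ik} x_k for 1 ≤ i,j ≤ n. Then for every x in the interior Δ_n° of the simplex, the n×n real symmetric matrix (g^{ij}(x)) is positive definite. -/

import Mathlib

open Finset

/-- Ellipticity of the co-metric `Γ_A` of the Dirichlet diffusion model on the
interior of the simplex, when the off-diagonal entries of `A` are positive. -/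
theorem stmt_1 (n : ℕ) (hn : 1 ≤ n)
    (A : Fin (n + 1) → Fin (n + 1) → ℝ)
    (hsymm : ∀ i j, A i j = A j i)
    (hdiag : ∀ i, A i i = 0)
    (hpos : ∀ i j, i ≠ j → 0 < A i j)
    (x : Fin n → ℝ) (hx : ∀ i, 0 < x i) (hxsum : ∑ i, x i < 1) :
    Matrix.PosDef (Matrix.of fun i j : Fin n =>
      -(A i.castSucc j.castSucc) * x i * x j
        + (if i = j then x i * ∑ k : Fin (n + 1),
            A i.castSucc k * (Fin.snoc x (1 - ∑ m : Fin n, x m) : Fin (n+1) → ℝ) k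
          else 0)) := by
  set X : Fin (n+1) → ℝ := (Fin.snoc x (1 - ∑ m : Fin n, x m) : Fin (n+1) → ℝ) with hXdef
  have hXc : ∀ i : Fin n, X i.castSucc = x i := fun i => Fin.snoc_castSucc _ _ _
  have hXl : X (Fin.last n) = 1 - ∑ m, x m := Fin.snoc_last _ _
  have hXpos : ∀ i, 0 < X i := by
    intro i
    induction i using Fin.lastCases with
    | last => rw [hXl]; linarith
    | cast i => rw [hXc]; exact hx i
  have hA0 : ∀ i k, 0 ≤ A i k := by
    intro i k
    rcases eq_or_ne i k with h | h
    · simp [h, hdiag]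
    · exact (hpos i k h).le
  refine Matrix.PosDef.of_dotProduct_mulVec_pos ?_ ?_
  · ext i j
    simp only [Matrix.conjTranspose_apply, Matrix.of_apply, star_trivial]
    rcases eq_or_ne i j with h | h
    · subst h; ring
    · rw [if_neg h, if_neg (Ne.symm h), hsymm j.castSucc i.castSucc]
      ring
  · intro v hv
    simp only [star_trivial]
    set V : Fin (n+1) → ℝ := (Fin.snoc v 0 : Fin (n+1) → ℝ) with hVdef
    have hVc : ∀ i : Fin n, V i.castSucc = v i := fun i => Fin.snoc_castSucc _ _ _
    have hVl : V (Fin.last n) = 0 := Fin.snoc_last _ _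
    have key : dotProduct v ((Matrix.of fun i j : Fin n =>
          -(A i.castSucc j.castSucc) * x i * x j
            + (if i = j then x i * ∑ k : Fin (n + 1), A i.castSucc k * X k else 0)).mulVec v)
        = (∑ i : Fin (n+1), ∑ k : Fin (n+1), A i k * X i * X k * (V i - V k)^2) / 2 := by
      -- reduce LHS
      have hL : dotProduct v ((Matrix.of fun i j : Fin n =>
          -(A i.castSucc j.castSucc) * x i * x j
            + (if i = j then x i * ∑ k : Fin (n + 1), A i.castSucc k * X k else 0)).mulVec v)
          = (∑ i : Fin n, (∑ k : Fin (n+1), A i.castSucc k * X k) * v i ^ 2 * x i)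
            - ∑ i : Fin n, ∑ j : Fin n, A i.castSucc j.castSucc * x i * x j * v i * v j := by
        simp only [dotProduct, Matrix.mulVec, Matrix.of_apply]
        rw [← Finset.sum_sub_distrib]
        refine Finset.sum_congr rfl fun i _ => ?_
        rw [Finset.mul_sum]
        simp only [add_mul, ite_mul, zero_mul, mul_add, mul_ite, mul_zero,
          Finset.sum_add_distrib, Finset.sum_ite_eq, Finset.mem_univ, if_true]
        rw [show (∑ j, v i * (-A i.castSucc j.castSucc * x i * x j * v j))
            = -∑ j : Fin n, A i.castSucc j.castSucc * x i * x j * v i * v j from by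
          rw [← Finset.sum_neg_distrib]
          exact Finset.sum_congr rfl fun j _ => by ring]
        ring
      rw [hL]
      have expand : ∀ i k : Fin (n+1), A i k * X i * X k * (V i - V k)^2
          = A i k * X k * V i ^ 2 * X i + A k i * X i * V k ^ 2 * X k
            - 2 * (A i k * X i * X k * V i * V k) := by
        intro i k; rw [hsymm k i]; ring
      simp only [expand]
      rw [show (∑ i : Fin (n+1), ∑ k : Fin (n+1),
            (A i k * X k * V i ^ 2 * X i + A k i * X i * V k ^ 2 * X k
              - 2 * (A i k * X i * X k * V i * V k)))
          = (∑ i : Fin (n+1), ∑ k : Fin (n+1), A i k * X k * V i ^ 2 * X i)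
            + (∑ i : Fin (n+1), ∑ k : Fin (n+1), A k i * X i * V k ^ 2 * X k)
            - 2 * (∑ i : Fin (n+1), ∑ k : Fin (n+1), A i k * X i * X k * V i * V k) from by
        rw [Finset.mul_sum, ← Finset.sum_add_distrib, ← Finset.sum_sub_distrib]
        refine Finset.sum_congr rfl fun i _ => ?_
        rw [Finset.mul_sum, ← Finset.sum_add_distrib, ← Finset.sum_sub_distrib]]
      have hP2 : (∑ i : Fin (n+1), ∑ k : Fin (n+1), A k i * X i * V k ^ 2 * X k)
          = ∑ i : Fin (n+1), ∑ k : Fin (n+1), A i k * X k * V i ^ 2 * X i := by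
        rw [Finset.sum_comm]
      have hP1 : (∑ i : Fin (n+1), ∑ k : Fin (n+1), A i k * X k * V i ^ 2 * X i)
          = ∑ i : Fin n, (∑ k : Fin (n+1), A i.castSucc k * X k) * v i ^ 2 * x i := by
        rw [Fin.sum_univ_castSucc]
        rw [show (∑ k : Fin (n+1), A (Fin.last n) k * X k * V (Fin.last n) ^ 2 * X (Fin.last n)) = 0
          from by simp [hVl]]
        rw [add_zero]
        refine Finset.sum_congr rfl fun i _ => ?_
        rw [hVc i, hXc i, Finset.sum_mul, Finset.sum_mul]
      have hP3 : (∑ i : Fin (n+1), ∑ k : Fin (n+1), A i k * X i * X k * V i * V k)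
          = ∑ i : Fin n, ∑ j : Fin n, A i.castSucc j.castSucc * x i * x j * v i * v j := by
        rw [Fin.sum_univ_castSucc]
        simp only [hVl, mul_zero, zero_mul, Finset.sum_const_zero, add_zero]
        refine Finset.sum_congr rfl fun i _ => ?_
        rw [Fin.sum_univ_castSucc]
        simp only [hVl, hVc, hXc, mul_zero, add_zero]
      rw [hP2, hP1, hP3]
      ring
    rw [key]
    apply div_pos ?_ (by norm_num)
    obtain ⟨i0, hi0⟩ := Function.ne_iff.mp hv
    simp only [Pi.zero_apply] at hi0
    refine Finset.sum_pos'
      (fun i _ => Finset.sum_nonneg fun k _ =>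
        mul_nonneg (mul_nonneg (mul_nonneg (hA0 i k) (hXpos i).le) (hXpos k).le) (sq_nonneg _))
      ⟨i0.castSucc, Finset.mem_univ _, ?_⟩
    refine Finset.sum_pos'
      (fun k _ =>
        mul_nonneg (mul_nonneg (mul_nonneg (hA0 _ k) (hXpos _).le) (hXpos k).le) (sq_nonneg _))
      ⟨Fin.last n, Finset.mem_univ _, ?_⟩
    have hne : i0.castSucc ≠ Fin.last n := Fin.ne_of_lt (Fin.castSucc_lt_last i0)
    have h2 : (0:ℝ) < (V i0.castSucc - V (Fin.last n))^2 := by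
      rw [hVc, hVl, sub_zero]
      exact pow_two_pos_of_ne_zero hi0
    exact mul_pos (mul_pos (mul_pos (hpos _ _ hne) (hXpos _)) (hXpos _)) h2
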